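/- arXiv:1209.2723 — 2 statements merged into one kernel-verified Lean document; each statement's English description precedes it below -/
import Mathlib

section
/- Let ξ_0, ..., ξ_n be elements of a commutative ring R, and consider the function ν ↦ (Σ_{ℓ=0}^n ν_ℓ ξ_ℓ)^k from (ℕ∪{0})^(n+1) to R. Applying k difference operators Δ_{r_1,s_1}, ..., Δ_{r_k,s_k} (with r_j ≠ s_j) to this function yields the constant function k! · ∏_{ℓ=1}^k (ξ_{r_ℓ} - ξ_{s_ℓ}). -/
open Polynomial

/-- The difference operator `(Δ_{p,q} F)(ν) = F(ν + e_p) - F(ν + e_q)` on functions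
of multi-indices of nonnegative integers. -/
def deltaOpN {n : ℕ} {R : Type*} [CommRing R] (p q : Fin (n + 1))
    (F : (Fin (n + 1) → ℕ) → R) : (Fin (n + 1) → ℕ) → R :=
  fun ν => F (fun i => ν i + if i = p then 1 else 0)
    - F (fun i => ν i + if i = q then 1 else 0)

lemma deltaOpN_comm {n : ℕ} {R : Type*} [CommRing R] (p q p' q' : Fin (n + 1))
    (F : (Fin (n + 1) → ℕ) → R) :
    deltaOpN p q (deltaOpN p' q' F) = deltaOpN p' q' (deltaOpN p q F) := by
  funext ν
  simp only [deltaOpN]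
  have h : ∀ a b : Fin (n+1),
      (fun i => (fun i => ν i + if i = a then 1 else 0) i + if i = b then 1 else 0)
      = (fun i => (fun i => ν i + if i = b then 1 else 0) i + if i = a then 1 else 0) := by
    intro a b; funext i; ring
  rw [h p p', h p q', h q p', h q q']
  ring

lemma foldr_deltaOpN_comm {n : ℕ} {R : Type*} [CommRing R] (p q : Fin (n + 1))
    (l : List (Fin (n+1) × Fin (n+1))) (F : (Fin (n + 1) → ℕ) → R) :
    deltaOpN p q (l.foldr (fun j H => deltaOpN j.1 j.2 H) F)
      = l.foldr (fun j H => deltaOpN j.1 j.2 H) (deltaOpN p q F) := by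
  induction l with
  | nil => rfl
  | cons a t ih =>
    simp only [List.foldr_cons]
    rw [deltaOpN_comm, ih]

lemma sum_shift {n : ℕ} {R : Type*} [CommRing R] (ξ : Fin (n + 1) → R)
    (ν : Fin (n + 1) → ℕ) (p : Fin (n + 1)) :
    (∑ ℓ, (((ν ℓ + if ℓ = p then 1 else 0 : ℕ)) : R) * ξ ℓ)
      = (∑ ℓ, ((ν ℓ : ℕ) : R) * ξ ℓ) + ξ p := by
  push_cast
  simp only [add_mul, Finset.sum_add_distrib, ite_mul, one_mul, zero_mul]
  rw [Finset.sum_ite_eq' Finset.univ p ξ]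
  simp

lemma deltaOpN_polyEval {n : ℕ} {R : Type*} [CommRing R] (ξ : Fin (n + 1) → R)
    (p q : Fin (n + 1)) (P : R[X]) :
    deltaOpN p q (fun ν => P.eval (∑ ℓ, ((ν ℓ : ℕ) : R) * ξ ℓ))
      = fun ν => (taylor (ξ p) P - taylor (ξ q) P).eval (∑ ℓ, ((ν ℓ : ℕ) : R) * ξ ℓ) := by
  funext ν
  simp only [deltaOpN, eval_sub, taylor_eval, sum_shift]

lemma key_lemma {n : ℕ} {R : Type*} [CommRing R] (ξ : Fin (n + 1) → R) :
    ∀ (m : ℕ) (P : R[X]), P.natDegree ≤ m → ∀ (r s : Fin m → Fin (n + 1)),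
    ∀ ν : Fin (n + 1) → ℕ,
      ((List.finRange m).foldr (fun j H => deltaOpN (r j) (s j) H)
        (fun ν : Fin (n + 1) → ℕ => P.eval (∑ ℓ, ((ν ℓ : ℕ) : R) * ξ ℓ))) ν
      = (m.factorial : R) * P.coeff m * ∏ ℓ : Fin m, (ξ (r ℓ) - ξ (s ℓ)) := by
  intro m
  induction m with
  | zero =>
    intro P hP r s ν
    simp only [List.finRange_zero, List.foldr_nil]
    rw [Polynomial.eq_C_of_natDegree_le_zero hP]
    simp
  | succ m ih =>
    intro P hP r s ν
    rw [List.finRange_succ, List.foldr_cons]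
    -- move the head delta to the inside
    have hcomm : deltaOpN (r 0) (s 0)
        (((List.finRange m).map Fin.succ).foldr (fun j H => deltaOpN (r j) (s j) H)
          (fun ν : Fin (n + 1) → ℕ => P.eval (∑ ℓ, ((ν ℓ : ℕ) : R) * ξ ℓ)))
        = ((List.finRange m).map Fin.succ).foldr (fun j H => deltaOpN (r j) (s j) H)
          (deltaOpN (r 0) (s 0)
            (fun ν : Fin (n + 1) → ℕ => P.eval (∑ ℓ, ((ν ℓ : ℕ) : R) * ξ ℓ))) := by
      have := foldr_deltaOpN_comm (r 0) (s 0)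
        (((List.finRange m).map Fin.succ).map (fun j => (r j, s j)))
        (fun ν : Fin (n + 1) → ℕ => P.eval (∑ ℓ, ((ν ℓ : ℕ) : R) * ξ ℓ))
      simpa [List.foldr_map] using this
    rw [hcomm, deltaOpN_polyEval, List.foldr_map]
    set Q : R[X] := taylor (ξ (r 0)) P - taylor (ξ (s 0)) P with hQ
    have hQdeg : Q.natDegree ≤ m := by
      rw [Polynomial.natDegree_le_iff_coeff_eq_zero]
      intro N hN
      simp only [hQ, Polynomial.coeff_sub, Polynomial.taylor_coeff]
      have hc : ((Polynomial.hasseDeriv N) P).natDegree ≤ 0 := by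
        refine le_trans (Polynomial.natDegree_hasseDeriv_le P N) ?_
        omega
      rw [Polynomial.eq_C_of_natDegree_le_zero hc]
      simp
    have hQcoeff : Q.coeff m = (m + 1 : R) * P.coeff (m + 1) * (ξ (r 0) - ξ (s 0)) := by
      simp only [hQ, Polynomial.coeff_sub, Polynomial.taylor_coeff]
      have hd : ((Polynomial.hasseDeriv m) P).natDegree ≤ 1 := by
        refine le_trans (Polynomial.natDegree_hasseDeriv_le P m) ?_
        omega
      rw [Polynomial.eq_X_add_C_of_natDegree_le_one hd]
      simp only [Polynomial.eval_add, Polynomial.eval_mul, Polynomial.eval_C,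
        Polynomial.eval_X, Polynomial.hasseDeriv_coeff]
      simp only [Nat.add_comm 1 m]
      push_cast [Nat.choose_succ_self_right]
      ring
    have := ih Q hQdeg (fun j => r j.succ) (fun j => s j.succ) ν
    rw [this, hQcoeff, Fin.prod_univ_succ]
    push_cast [Nat.factorial_succ]
    ring

/-- Applying `k` difference operators `Δ_{r_1,s_1}, …, Δ_{r_k,s_k}` (with `r_j ≠ s_j`)
to the function `ν ↦ (∑_ℓ ν_ℓ ξ_ℓ)^k` yields the constant function
`k! ∏_{ℓ=1}^k (ξ_{r_ℓ} - ξ_{s_ℓ})`. -/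
theorem iterated_delta_pow_linear
    (n k : ℕ) (R : Type*) [CommRing R]
    (ξ : Fin (n + 1) → R)
    (r s : Fin k → Fin (n + 1)) (hrs : ∀ j, r j ≠ s j) :
    ∀ ν : Fin (n + 1) → ℕ,
      ((List.finRange k).foldr (fun j H => deltaOpN (r j) (s j) H)
        (fun ν : Fin (n + 1) → ℕ => (∑ ℓ, ((ν ℓ : ℕ) : R) * ξ ℓ) ^ k)) ν
      = (k.factorial : R) * ∏ ℓ : Fin k, (ξ (r ℓ) - ξ (s ℓ)) := by
  intro ν
  have h := key_lemma ξ k (Polynomial.X ^ k) (Polynomial.natDegree_X_pow_le k) r s ν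
  simpa [Polynomial.coeff_X_pow] using h
end

section
/- Define Φ^(k)_ν inductively by Φ^(0)_ν = 1 and Φ^(k+1)_ν = (Σ_{ℓ=0}^n ν_ℓ ξ^(1)_ℓ)·Φ^(k)_ν + Σ_{ℓ=0}^n Σ_{i=1}^k ξ^(i+1)_ℓ · ∂Φ^(k)_ν/∂ξ^(i)_ℓ, where ξ^(i)_ℓ are independent variables and ν = (ν_0,...,ν_n) a multi-index. Then for each k, viewing Φ^(k)_ν as a polynomial in ν_0,...,ν_n, the difference Φ^(k)_ν − (Σ_{ℓ=0}^n ν_ℓ ξ^(1)_ℓ)^k has degree at most k−1 in ν. -/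
open MvPolynomial

section helpers

variable {σ : Type*}

open Finsupp

lemma wtd_le_iff (w : σ → ℕ) (p : MvPolynomial σ ℚ) (m : ℕ) :
    weightedTotalDegree w p ≤ m ↔ ∀ d ∈ p.support, weight w d ≤ m :=
  Finset.sup_le_iff

lemma wtd_add_le {w : σ → ℕ} {p q : MvPolynomial σ ℚ} {a : ℕ}
    (hp : weightedTotalDegree w p ≤ a) (hq : weightedTotalDegree w q ≤ a) :
    weightedTotalDegree w (p + q) ≤ a := by
  classical
  rw [wtd_le_iff] at hp hq ⊢
  intro d hd
  rcases Finset.mem_union.mp (MvPolynomial.support_add hd) with h | h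
  · exact hp d h
  · exact hq d h

lemma wtd_mul_le {w : σ → ℕ} {p q : MvPolynomial σ ℚ} {a b : ℕ}
    (hp : weightedTotalDegree w p ≤ a) (hq : weightedTotalDegree w q ≤ b) :
    weightedTotalDegree w (p * q) ≤ a + b := by
  classical
  rw [wtd_le_iff] at hp hq ⊢
  intro d hd
  obtain ⟨d₁, hd₁, d₂, hd₂, rfl⟩ := Finset.mem_add.mp (MvPolynomial.support_mul p q hd)
  rw [map_add]
  exact add_le_add (hp d₁ hd₁) (hq d₂ hd₂)

lemma wtd_sum_le {w : σ → ℕ} {α : Type*} {s : Finset α} {f : α → MvPolynomial σ ℚ} {a : ℕ}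
    (h : ∀ i ∈ s, weightedTotalDegree w (f i) ≤ a) :
    weightedTotalDegree w (∑ i ∈ s, f i) ≤ a := by
  classical
  induction s using Finset.induction_on with
  | empty => simp [weightedTotalDegree]
  | insert _ _ hx ih =>
    rw [Finset.sum_insert hx]
    exact wtd_add_le (h _ (Finset.mem_insert_self _ _))
      (ih fun i hi => h i (Finset.mem_insert_of_mem hi))

lemma wtd_X_le {w : σ → ℕ} (s : σ) :
    weightedTotalDegree w (X s : MvPolynomial σ ℚ) ≤ w s := by
  rw [wtd_le_iff]
  intro d hd
  rw [MvPolynomial.support_X, Finset.mem_singleton] at hd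
  subst hd
  simp [Finsupp.weight_apply, Finsupp.sum_single_index]

lemma wtd_one_le {w : σ → ℕ} : weightedTotalDegree w (1 : MvPolynomial σ ℚ) ≤ 0 := by
  rw [show (1 : MvPolynomial σ ℚ) = monomial 0 1 by simp, wtd_le_iff]
  intro d hd
  have h := MvPolynomial.support_monomial_subset hd
  rw [Finset.mem_singleton] at h
  subst h
  simp

lemma wtd_pderiv_le {w : σ → ℕ} {p : MvPolynomial σ ℚ} {a : ℕ}
    (hp : weightedTotalDegree w p ≤ a) (i : σ) :
    weightedTotalDegree w (pderiv i p) ≤ a := by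
  classical
  rw [wtd_le_iff] at hp
  conv_lhs => rw [p.as_sum]
  rw [map_sum]
  apply wtd_sum_le
  intro d hd
  rw [pderiv_monomial]
  rw [wtd_le_iff]
  intro e he
  have hsub := MvPolynomial.support_monomial_subset he
  rw [Finset.mem_singleton] at hsub
  subst hsub
  calc weight w (d - Finsupp.single i 1) ≤ weight w d := by
        have hle : d - Finsupp.single i 1 ≤ d := tsub_le_self
        have : (d - Finsupp.single i 1) + (d - (d - Finsupp.single i 1)) = d :=
          add_tsub_cancel_of_le hle
        calc weight w (d - Finsupp.single i 1)
            ≤ weight w (d - Finsupp.single i 1) + weight w (d - (d - Finsupp.single i 1)) :=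
              Nat.le_add_right _ _
          _ = weight w d := by rw [← map_add, this]
    _ ≤ a := hp d hd

end helpers

/-- The polynomials `Φ^(k)_ν` in the variables `ξ^(i)_ℓ` (indexed by
`Sum.inl (i-1, ℓ)`) and `ν_ℓ` (indexed by `Sum.inr ℓ`), defined by
`Φ^(0) = 1` and
`Φ^(k+1) = (Σ_ℓ ν_ℓ ξ^(1)_ℓ)·Φ^(k) + Σ_ℓ Σ_{i=1}^k ξ^(i+1)_ℓ ∂Φ^(k)/∂ξ^(i)_ℓ`. -/
noncomputable def phiPoly (n : ℕ) : ℕ → MvPolynomial ((ℕ × Fin (n + 1)) ⊕ Fin (n + 1)) ℚ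
  | 0 => 1
  | k + 1 =>
      (∑ ℓ : Fin (n + 1), X (Sum.inr ℓ) * X (Sum.inl (0, ℓ))) * phiPoly n k
        + ∑ ℓ : Fin (n + 1), ∑ i ∈ Finset.range k,
            X (Sum.inl (i + 1, ℓ)) * pderiv (Sum.inl (i, ℓ)) (phiPoly n k)

section main

variable (n : ℕ)

local notation "W" => (Sum.elim (fun _ => 0) (fun _ => 1) :
  ((ℕ × Fin (n + 1)) ⊕ Fin (n + 1)) → ℕ)

lemma wtd_S_le :
    weightedTotalDegree W
      (∑ ℓ : Fin (n + 1), X (Sum.inr ℓ) * X (Sum.inl (0, ℓ)) :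
        MvPolynomial ((ℕ × Fin (n + 1)) ⊕ Fin (n + 1)) ℚ) ≤ 1 := by
  apply wtd_sum_le
  intro ℓ _
  have h1 := wtd_X_le (w := W) (Sum.inr ℓ)
  have h2 := wtd_X_le (w := W) (Sum.inl (0, ℓ))
  simpa using wtd_mul_le h1 h2

lemma wtd_phi_le : ∀ k, weightedTotalDegree W (phiPoly n k) ≤ k := by
  intro k
  induction k with
  | zero => exact wtd_one_le
  | succ k ih =>
    rw [phiPoly]
    apply wtd_add_le
    · have := wtd_mul_le (wtd_S_le n) ih
      simpa [Nat.add_comm] using this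
    · apply le_trans _ (Nat.le_succ k)
      apply wtd_sum_le; intro ℓ _
      apply wtd_sum_le; intro i _
      have h1 := wtd_X_le (w := W) (Sum.inl (i + 1, ℓ))
      simpa using wtd_mul_le h1 (wtd_pderiv_le ih _)

end main

/-- Viewed as a polynomial in the variables `ν_0, …, ν_n`, the difference
`Φ^(k)_ν − (Σ_ℓ ν_ℓ ξ^(1)_ℓ)^k` has degree at most `k − 1` in `ν`. -/
theorem phiPoly_sub_pow_degree_le (n k : ℕ) :
    MvPolynomial.weightedTotalDegree
      (Sum.elim (fun _ => 0) (fun _ => 1) :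
        ((ℕ × Fin (n + 1)) ⊕ Fin (n + 1)) → ℕ)
      (phiPoly n k
        - (∑ ℓ : Fin (n + 1), X (Sum.inr ℓ) * X (Sum.inl (0, ℓ))) ^ k)
      ≤ k - 1 := by
  induction k with
  | zero => simp [phiPoly, weightedTotalDegree]
  | succ k ih =>
    set S : MvPolynomial ((ℕ × Fin (n + 1)) ⊕ Fin (n + 1)) ℚ :=
      ∑ ℓ : Fin (n + 1), X (Sum.inr ℓ) * X (Sum.inl (0, ℓ)) with hS
    have key : phiPoly n (k + 1) - S ^ (k + 1)
        = S * (phiPoly n k - S ^ k)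
          + ∑ ℓ : Fin (n + 1), ∑ i ∈ Finset.range k,
              X (Sum.inl (i + 1, ℓ)) * pderiv (Sum.inl (i, ℓ)) (phiPoly n k) := by
      rw [phiPoly]; ring
    rw [key]
    cases k with
    | zero =>
      simp only [phiPoly, pow_zero, sub_self, mul_zero, zero_add]
      apply wtd_sum_le; intro ℓ _
      simp [weightedTotalDegree]
    | succ m =>
      apply wtd_add_le
      · have := wtd_mul_le (wtd_S_le n) ih
        simpa [Nat.add_comm] using this
      · apply wtd_sum_le; intro ℓ _
        apply wtd_sum_le; intro i _
        have h1 := wtd_X_le (w := (Sum.elim (fun _ => 0) (fun _ => 1) :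
          ((ℕ × Fin (n + 1)) ⊕ Fin (n + 1)) → ℕ)) (Sum.inl (i + 1, ℓ))
        simpa using wtd_mul_le h1 (wtd_pderiv_le (wtd_phi_le n (m + 1)) _)
end
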